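/- For every nonnegative integer n, the identity ∑_{j=0}^{n} C(n+j, n) · (−E/B + j + 1)_{n−j} · ((A + 2C − E)/(2B))_j · (2C + A + (2nj/(n+j))B − ((n−j)/(n+j))E) = 2B · C(2n, n) · ((A + 2C − E)/(2B))_{n+1} holds as an identity of rational functions in A, B, C, E (with the j = 0 term interpreted via 2C + A − E when n = 0). -/

import Mathlib

open Finset Polynomial

lemma aux {K : Type*} [Field K] [CharZero K] (x y : K) (n : ℕ) :
    ∀ m, m ≤ n →
    ∑ j ∈ range (m + 1),
      ((n + j).choose n : K) * (ascPochhammer K (n - j)).eval (y + j + 1) *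
        (ascPochhammer K j).eval x * (x + j * ((n : K) - y) / ((n : K) + j))
    = ((n + m).choose n : K) * (ascPochhammer K (n - m)).eval (y + m + 1) *
        (ascPochhammer K (m + 1)).eval x := by
  intro m
  induction m with
  | zero =>
    intro _
    simp [ascPochhammer_succ_right]
  | succ m ih =>
    intro hm
    rw [Finset.sum_range_succ, ih (le_of_lt hm)]
    have hnm : n - m = (n - (m+1)) + 1 := by omega
    have hden : ((n : K) + ((m : K) + 1)) ≠ 0 := by
      have h0 : ((n:K) + ((m:K)+1)) = ((n + (m+1) : ℕ) : K) := by push_cast; ring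
      rw [h0]
      exact Nat.cast_ne_zero.2 (by omega)
    have hchoose : (((m+1) * ((n + m + 1).choose n) : ℕ) : K)
        = (((n + m + 1) * ((n+m).choose n) : ℕ) : K) := by
      congr 1
      have h1 := Nat.add_one_mul_choose_eq (n + m) m
      have h2 : (n + m).choose m = (n + m).choose n := by
        conv_rhs => rw [← Nat.choose_symm (Nat.le_add_right n m)]
        congr 1; omega
      have h3 : (n + m + 1).choose (m + 1) = (n + m + 1).choose n := by
        conv_rhs => rw [← Nat.choose_symm (show n ≤ n+m+1 by omega)]
        congr 1; omega
      rw [h2, h3] at h1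
      rw [h1]
      exact mul_comm _ _
    push_cast at hchoose
    have e1 : (ascPochhammer K (n-m)).eval (y + (m:K) + 1)
        = (y + (m:K) + 1) * (ascPochhammer K (n-(m+1))).eval (y + (m:K) + 1 + 1) := by
      rw [hnm, ascPochhammer_succ_left]
      simp [eval_comp]
    have e2 : (ascPochhammer K (m+1+1)).eval x
        = (ascPochhammer K (m+1)).eval x * (x + ((m:K)+1)) := by
      rw [ascPochhammer_succ_right]
      push_cast
      simp
    rw [e1]
    push_cast
    rw [e2]
    have hc2 : ((n + (m+1)).choose n : K) = ((n + m + 1).choose n : K) := by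
      norm_cast
    field_simp
    rw [hc2, show y + ((m:K) + 1) + 1 = y + (m:K) + 1 + 1 from by ring]
    linear_combination (-((ascPochhammer K (n - (m+1))).eval (y + (m:K) + 1 + 1) *
      (ascPochhammer K (m+1)).eval x * (y + (m:K) + 1))) * hchoose

/-- the Gosper-summable identity
∑_{j=0}^{n} C(n+j,n) (−E/B+j+1)_{n−j} ((A+2C−E)/(2B))_j
  (2C + A + (2nj/(n+j))B − ((n−j)/(n+j))E) = 2B C(2n,n) ((A+2C−E)/(2B))_{n+1},
as an identity in a field of characteristic 0 with B ≠ 0 (the j = 0 term being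
interpreted via 2C + A − E when n = 0). -/
theorem statement0 {K : Type*} [Field K] [CharZero K] (A B C E : K) (hB : B ≠ 0)
    (n : ℕ) :
    ∑ j ∈ range (n + 1),
      ((n + j).choose n : K) *
        (ascPochhammer K (n - j)).eval (-E / B + j + 1) *
        (ascPochhammer K j).eval ((A + 2 * C - E) / (2 * B)) *
        (if n + j = 0 then 2 * C + A - E
         else 2 * C + A + (2 * n * j / (n + j : K)) * B - (((n : K) - j) / (n + j : K)) * E)
      = 2 * B * ((2 * n).choose n : K) *
          (ascPochhammer K (n + 1)).eval ((A + 2 * C - E) / (2 * B)) := by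
  set x : K := (A + 2 * C - E) / (2 * B) with hx
  set y : K := -E / B with hy
  have key := aux x y n n le_rfl
  have hterm : ∀ j ∈ range (n + 1),
      ((n + j).choose n : K) *
        (ascPochhammer K (n - j)).eval (-E / B + j + 1) *
        (ascPochhammer K j).eval x *
        (if n + j = 0 then 2 * C + A - E
         else 2 * C + A + (2 * n * j / (n + j : K)) * B - (((n : K) - j) / (n + j : K)) * E)
      = 2 * B * (((n + j).choose n : K) * (ascPochhammer K (n - j)).eval (y + j + 1) *
          (ascPochhammer K j).eval x * (x + j * ((n : K) - y) / ((n : K) + j))) := by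
    intro j _
    have hyj : -E / B + (j : K) + 1 = y + j + 1 := by rw [hy]
    rw [hyj]
    by_cases h0 : n + j = 0
    · obtain ⟨hn0, hj0⟩ : n = 0 ∧ j = 0 := by omega
      subst hn0; subst hj0
      simp only [if_pos rfl]
      push_cast
      rw [hx]
      field_simp
      ring
    · rw [if_neg h0]
      have hnj : ((n : K) + j) ≠ 0 := by
        have : ((n + j : ℕ) : K) ≠ 0 := Nat.cast_ne_zero.2 h0
        push_cast at this; exact this
      rw [hx, hy]
      field_simp
      ring
  rw [Finset.sum_congr rfl hterm, ← Finset.mul_sum, key]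
  have h2n : ((2 * n).choose n : K) = ((n + n).choose n : K) := by
    norm_cast
    rw [two_mul]
  rw [h2n]
  simp [mul_comm, mul_assoc, mul_left_comm]
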